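/- The Fourier coefficients c(n) of the eta quotient η(τ)^24/η(2τ)^24 never vanish: c(n) ≠ 0 for all integers n ≥ -1. -/

import Mathlib

open Polynomial

/-- `c : ℤ → ℤ` is the coefficient sequence of the formal Laurent series
`q⁻¹ ∏_{m≥1} (1-q^m)^24 (1-q^{2m})^{-24} = ∑_{n ≥ -1} c(n) qⁿ`:
it vanishes below `-1`, and for every `N` the coefficient of `q^N` in
`(∑_{n=-1}^{N+1} c(n) q^{n+1}) · ∏_{m=1}^{N} (1-q^{2m})^{24}` agrees with that of
`∏_{m=1}^{N} (1-q^m)^{24}` (factors with `m > N` do not affect this coefficient). -/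
def IsEtaQuotCoeff (c : ℤ → ℤ) : Prop :=
  (∀ n : ℤ, n < -1 → c n = 0) ∧
  ∀ N : ℕ,
    ((∑ n ∈ Finset.range (N + 2), C (c ((n : ℤ) - 1)) * X ^ n) *
        ∏ m ∈ Finset.Icc 1 N, ((1 : ℤ[X]) - X ^ (2 * m)) ^ 24).coeff N =
      (∏ m ∈ Finset.Icc 1 N, ((1 : ℤ[X]) - X ^ m) ^ 24).coeff N

noncomputable section EtaAux

namespace EtaAux

/-- The odd numbers in `[1, k]`. -/
def oddFactors (k : ℕ) : Finset ℕ := (Finset.Icc 1 k).filter (fun m => Odd m)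

/-- Partial products of `∏_{m odd} (1 - X^m)^24`. -/
def Pe (k : ℕ) : ℤ[X] := ∏ m ∈ oddFactors k, ((1 : ℤ[X]) - X ^ m) ^ 24

/-- Partial products of `∏_{m odd} (1 + X^m)^24`. -/
def Qe (k : ℕ) : ℤ[X] := ∏ m ∈ oddFactors k, ((1 : ℤ[X]) + X ^ m) ^ 24

lemma coeff_eq_of_dvd {p q : ℤ[X]} {s k : ℕ} (h : (X : ℤ[X]) ^ s ∣ p - q) (hk : k < s) :
    p.coeff k = q.coeff k := by
  obtain ⟨r, hr⟩ := h
  have h2 : (p - q).coeff k = 0 := by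
    rw [hr, Polynomial.coeff_X_pow_mul']
    rw [if_neg (by omega)]
  rw [Polynomial.coeff_sub] at h2
  linarith

lemma dvd_pow_sub_one {u : ℤ[X]} {m : ℕ} (h : (X : ℤ[X]) ^ m ∣ u - 1) (e : ℕ) :
    (X : ℤ[X]) ^ m ∣ u ^ e - 1 := by
  have h2 : u - 1 ∣ u ^ e - 1 := by simpa using sub_dvd_pow_sub_pow u 1 e
  exact h.trans h2

lemma dvd_prod_sub_one {s : Finset ℕ} {f : ℕ → ℤ[X]} {b : ℤ[X]}
    (h : ∀ i ∈ s, b ∣ f i - 1) : b ∣ (∏ i ∈ s, f i) - 1 := by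
  classical
  induction s using Finset.induction_on with
  | empty => simp
  | @insert a s ha ih =>
    rw [Finset.prod_insert ha]
    have h1 : b ∣ f a - 1 := h a (Finset.mem_insert_self a s)
    have h2 : b ∣ (∏ i ∈ s, f i) - 1 := ih fun i hi => h i (Finset.mem_insert_of_mem hi)
    have key : f a * (∏ i ∈ s, f i) - 1
        = f a * ((∏ i ∈ s, f i) - 1) + (f a - 1) := by ring
    rw [key]
    exact dvd_add (Dvd.dvd.mul_left h2 _) h1

lemma coeff_mul_left_congr {p p' A : ℤ[X]} {N : ℕ}
    (h : ∀ i ≤ N, p.coeff i = p'.coeff i) : (p * A).coeff N = (p' * A).coeff N := by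
  rw [Polynomial.coeff_mul, Polynomial.coeff_mul]
  refine Finset.sum_congr rfl fun x hx => ?_
  rw [Finset.HasAntidiagonal.mem_antidiagonal] at hx
  rw [h x.1 (by omega)]

lemma coeff_mul_of_dvd_sub_one {p E : ℤ[X]} {N : ℕ}
    (h : (X : ℤ[X]) ^ (N + 1) ∣ E - 1) : (p * E).coeff N = p.coeff N := by
  refine coeff_eq_of_dvd (s := N + 1) ?_ (Nat.lt_succ_self N)
  have key : p * E - p = p * (E - 1) := by ring
  rw [key]
  exact h.mul_left p

lemma Pe_stable {n K : ℕ} (h : n ≤ K) : (Pe K).coeff n = (Pe n).coeff n := by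
  have hs : oddFactors n ⊆ oddFactors K :=
    Finset.filter_subset_filter _ (Finset.Icc_subset_Icc le_rfl h)
  have hsplit : Pe K = Pe n * ∏ m ∈ oddFactors K \ oddFactors n, ((1 : ℤ[X]) - X ^ m) ^ 24 := by
    rw [Pe, Pe, mul_comm]
    exact (Finset.prod_sdiff hs).symm
  rw [hsplit]
  apply coeff_mul_of_dvd_sub_one
  apply dvd_prod_sub_one
  intro m hm
  simp only [oddFactors, Finset.mem_sdiff, Finset.mem_filter, Finset.mem_Icc] at hm
  obtain ⟨⟨⟨h1, hK⟩, hodd⟩, hnot⟩ := hm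
  have hm2 : n + 1 ≤ m := by
    by_contra hlt
    exact hnot ⟨⟨h1, by omega⟩, hodd⟩
  have hbase : (X : ℤ[X]) ^ m ∣ (1 - X ^ m) - 1 := ⟨-1, by ring⟩
  exact dvd_pow_sub_one ((pow_dvd_pow X hm2).trans hbase) 24

/-- The candidate coefficient sequence. -/
def cEta : ℤ → ℤ := fun n => if n < -1 then 0 else (Pe (n + 1).toNat).coeff (n + 1).toNat

lemma cEta_nat (n : ℕ) : cEta ((n : ℤ) - 1) = (Pe n).coeff n := by
  have h1 : ¬((n : ℤ) - 1 < -1) := by omega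
  have h2 : ((n : ℤ) - 1 + 1).toNat = n := by omega
  simp [cEta, h1, h2]

lemma coeff_partial_sum (c : ℤ → ℤ) (M i : ℕ) (hi : i < M) :
    (∑ n ∈ Finset.range M, C (c ((n : ℤ) - 1)) * X ^ n).coeff i = c ((i : ℤ) - 1) := by
  rw [Polynomial.finset_sum_coeff]
  have hterm : ∀ n ∈ Finset.range M, (C (c ((n : ℤ) - 1)) * X ^ n).coeff i
      = if i = n then c ((n : ℤ) - 1) else 0 := by
    intro n _
    rw [Polynomial.coeff_C_mul, Polynomial.coeff_X_pow]
    split_ifs with hni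
    · ring
    · ring
  rw [Finset.sum_congr rfl hterm, Finset.sum_ite_eq (Finset.range M) i]
  rw [if_pos (Finset.mem_range.mpr hi)]

lemma constant_coeff_aux (s : Finset ℕ) (g : ℕ → ℕ) (hg : ∀ m ∈ s, g m ≠ 0) :
    (∏ m ∈ s, ((1 : ℤ[X]) - X ^ (g m)) ^ 24).coeff 0 = 1 := by
  rw [Polynomial.coeff_zero_eq_eval_zero, Polynomial.eval_prod]
  apply Finset.prod_eq_one
  intro m hm
  simp [zero_pow (hg m hm)]

lemma coeff_expand (c : ℤ → ℤ) (N : ℕ) :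
    ((∑ n ∈ Finset.range (N + 2), C (c ((n : ℤ) - 1)) * X ^ n) *
        ∏ m ∈ Finset.Icc 1 N, ((1 : ℤ[X]) - X ^ (2 * m)) ^ 24).coeff N =
      c ((N : ℤ) - 1) + ∑ n ∈ Finset.range N, c ((n : ℤ) - 1) *
        (∏ m ∈ Finset.Icc 1 N, ((1 : ℤ[X]) - X ^ (2 * m)) ^ 24).coeff (N - n) := by
  set A : ℤ[X] := ∏ m ∈ Finset.Icc 1 N, ((1 : ℤ[X]) - X ^ (2 * m)) ^ 24 with hA
  have hA0 : A.coeff 0 = 1 := by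
    rw [hA]
    apply constant_coeff_aux
    intro m hm
    rw [Finset.mem_Icc] at hm
    omega
  rw [Finset.sum_mul, Polynomial.finset_sum_coeff]
  have hterm : ∀ n ∈ Finset.range (N + 2), (C (c ((n : ℤ) - 1)) * X ^ n * A).coeff N
      = if n ≤ N then c ((n : ℤ) - 1) * A.coeff (N - n) else 0 := by
    intro n _
    rw [mul_assoc, Polynomial.coeff_C_mul, Polynomial.coeff_X_pow_mul']
    split_ifs with h
    · rfl
    · ring
  rw [Finset.sum_congr rfl hterm, Finset.sum_range_succ, Finset.sum_range_succ]
  rw [if_neg (show ¬(N + 1 ≤ N) by omega), if_pos (le_refl N)]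
  simp only [Nat.sub_self, hA0, mul_one, add_zero]
  rw [add_comm]
  congr 1
  refine Finset.sum_congr rfl fun n hn => ?_
  rw [Finset.mem_range] at hn
  rw [if_pos (by omega)]

lemma cEta_spec : IsEtaQuotCoeff cEta := by
  constructor
  · intro n hn; simp [cEta, hn]
  · intro N
    set A : ℤ[X] := ∏ m ∈ Finset.Icc 1 N, ((1 : ℤ[X]) - X ^ (2 * m)) ^ 24 with hA
    have step1 : ((∑ n ∈ Finset.range (N + 2), C (cEta ((n : ℤ) - 1)) * X ^ n) * A).coeff N
        = (Pe N * A).coeff N := by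
      apply coeff_mul_left_congr
      intro i hi
      rw [coeff_partial_sum cEta (N + 2) i (by omega), cEta_nat i]
      exact (Pe_stable hi).symm
    have hIcc : Finset.Icc 1 N = Finset.Ioc 0 N := by
      ext x; simp [Finset.mem_Icc, Finset.mem_Ioc]; omega
    have hsplitA : A = (∏ m ∈ Finset.Ioc 0 (N / 2), ((1 : ℤ[X]) - X ^ (2 * m)) ^ 24)
        * ∏ m ∈ Finset.Ioc (N / 2) N, ((1 : ℤ[X]) - X ^ (2 * m)) ^ 24 := by
      rw [hA, hIcc]
      exact (Finset.prod_Ioc_consecutive _ (Nat.zero_le _) (Nat.div_le_self N 2)).symm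
    have step2 : (Pe N * A).coeff N
        = (Pe N * ∏ m ∈ Finset.Ioc 0 (N / 2), ((1 : ℤ[X]) - X ^ (2 * m)) ^ 24).coeff N := by
      rw [hsplitA, ← mul_assoc]
      apply coeff_mul_of_dvd_sub_one
      apply dvd_prod_sub_one
      intro m hm
      rw [Finset.mem_Ioc] at hm
      have h2m : N + 1 ≤ 2 * m := by omega
      have hbase : (X : ℤ[X]) ^ (2 * m) ∣ (1 - X ^ (2 * m)) - 1 := ⟨-1, by ring⟩
      exact dvd_pow_sub_one ((pow_dvd_pow X h2m).trans hbase) 24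
    have reindex : (∏ m ∈ Finset.Ioc 0 (N / 2), ((1 : ℤ[X]) - X ^ (2 * m)) ^ 24)
        = ∏ j ∈ (Finset.Icc 1 N).filter (fun j => ¬ Odd j), ((1 : ℤ[X]) - X ^ j) ^ 24 := by
      refine Finset.prod_nbij' (fun m => 2 * m) (fun j => j / 2) ?_ ?_ ?_ ?_ ?_
      · intro a ha
        rw [Finset.mem_Ioc] at ha
        simp only [Finset.mem_filter, Finset.mem_Icc, Nat.not_odd_iff_even]
        refine ⟨⟨by omega, ?_⟩, ⟨a, by omega⟩⟩
        have := (Nat.le_div_iff_mul_le (by norm_num : 0 < 2)).mp ha.2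
        omega
      · intro j hj
        simp only [Finset.mem_filter, Finset.mem_Icc, Nat.not_odd_iff_even] at hj
        obtain ⟨⟨h1, h2⟩, t, ht⟩ := hj
        rw [Finset.mem_Ioc]
        constructor
        · omega
        · exact Nat.div_le_div_right h2
      · intro a _; omega
      · intro j hj
        simp only [Finset.mem_filter, Nat.not_odd_iff_even] at hj
        obtain ⟨t, ht⟩ := hj.2
        omega
      · intro a _; rfl
    have step3 : Pe N * (∏ m ∈ Finset.Ioc 0 (N / 2), ((1 : ℤ[X]) - X ^ (2 * m)) ^ 24)
        = ∏ m ∈ Finset.Icc 1 N, ((1 : ℤ[X]) - X ^ m) ^ 24 := by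
      rw [reindex, Pe, oddFactors]
      exact Finset.prod_filter_mul_prod_filter_not _ _ _
    rw [step1, step2, step3]

lemma eta_unique {c c' : ℤ → ℤ} (hc : IsEtaQuotCoeff c) (hc' : IsEtaQuotCoeff c') :
    ∀ N : ℕ, c ((N : ℤ) - 1) = c' ((N : ℤ) - 1) := by
  intro N
  induction N using Nat.strong_induction_on with
  | _ N ih =>
    have e1 := hc.2 N
    have e2 := hc'.2 N
    rw [coeff_expand] at e1 e2
    have hsum : (∑ n ∈ Finset.range N, c ((n : ℤ) - 1) *
          (∏ m ∈ Finset.Icc 1 N, ((1 : ℤ[X]) - X ^ (2 * m)) ^ 24).coeff (N - n))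
        = ∑ n ∈ Finset.range N, c' ((n : ℤ) - 1) *
          (∏ m ∈ Finset.Icc 1 N, ((1 : ℤ[X]) - X ^ (2 * m)) ^ 24).coeff (N - n) :=
      Finset.sum_congr rfl fun n hn => by rw [ih n (Finset.mem_range.mp hn)]
    rw [hsum] at e1
    linarith

lemma coeff_comp_neg (p : ℤ[X]) (k : ℕ) : (p.comp (-X)).coeff k = (-1) ^ k * p.coeff k := by
  induction p using Polynomial.induction_on' with
  | add p q hp hq => simp [Polynomial.add_comp, hp, hq]; ring
  | monomial n a =>
    rw [Polynomial.monomial_comp, neg_pow]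
    have hC : ((-1 : ℤ[X])) ^ n = C ((-1 : ℤ) ^ n) := by
      rw [map_pow, map_neg, map_one]
    rw [hC, ← mul_assoc, ← Polynomial.C_mul, Polynomial.coeff_C_mul, Polynomial.coeff_X_pow,
      Polynomial.coeff_monomial]
    split_ifs with h1 h2 h3
    · subst h2; ring
    · omega
    · omega
    · ring

lemma Pe_eq_Qe_comp (k : ℕ) : Pe k = (Qe k).comp (-X) := by
  rw [Qe, Polynomial.prod_comp, Pe]
  refine Finset.prod_congr rfl fun m hm => ?_
  have hodd : Odd m := (Finset.mem_filter.mp hm).2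
  rw [Polynomial.pow_comp, Polynomial.add_comp, Polynomial.one_comp, Polynomial.pow_comp,
    Polynomial.X_comp, hodd.neg_pow]
  ring

/-- All coefficients nonnegative. -/
def CoeffNonneg (p : ℤ[X]) : Prop := ∀ k, 0 ≤ p.coeff k

lemma CoeffNonneg.mul {p q : ℤ[X]} (hp : CoeffNonneg p) (hq : CoeffNonneg q) :
    CoeffNonneg (p * q) := by
  intro k
  rw [Polynomial.coeff_mul]
  exact Finset.sum_nonneg fun x _ => mul_nonneg (hp _) (hq _)

lemma CoeffNonneg.one : CoeffNonneg (1 : ℤ[X]) := by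
  intro k
  rw [Polynomial.coeff_one]
  split_ifs <;> norm_num

lemma CoeffNonneg.pow {p : ℤ[X]} (hp : CoeffNonneg p) (n : ℕ) : CoeffNonneg (p ^ n) := by
  induction n with
  | zero => simpa using CoeffNonneg.one
  | succ n ih => rw [pow_succ]; exact ih.mul hp

lemma CoeffNonneg.prod {s : Finset ℕ} {f : ℕ → ℤ[X]} (h : ∀ i ∈ s, CoeffNonneg (f i)) :
    CoeffNonneg (∏ i ∈ s, f i) := by
  classical
  induction s using Finset.induction_on with
  | empty => simpa using CoeffNonneg.one
  | @insert a s ha ih =>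
    rw [Finset.prod_insert ha]
    exact (h a (Finset.mem_insert_self a s)).mul (ih fun i hi => h i (Finset.mem_insert_of_mem hi))

lemma onePlusXpow_nonneg (m : ℕ) : CoeffNonneg ((1 : ℤ[X]) + X ^ m) := by
  intro k
  rw [Polynomial.coeff_add, Polynomial.coeff_one, Polynomial.coeff_X_pow]
  split_ifs <;> norm_num

lemma coeff_mul_le {p q : ℤ[X]} (hp : CoeffNonneg p) (hq : CoeffNonneg q) (i j : ℕ) :
    p.coeff i * q.coeff j ≤ (p * q).coeff (i + j) := by
  rw [Polynomial.coeff_mul]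
  exact Finset.single_le_sum (f := fun x : ℕ × ℕ => p.coeff x.1 * q.coeff x.2)
    (fun x _ => mul_nonneg (hp _) (hq _))
    (Finset.HasAntidiagonal.mem_antidiagonal.mpr (rfl : (i, j).1 + (i, j).2 = i + j))

lemma coeff_onePlus_pow_pos {m : ℕ} (hm : 1 ≤ m) (e : ℕ) :
    0 < (((1 : ℤ[X]) + X ^ m) ^ (e + 1)).coeff m := by
  have h0 : (((1 : ℤ[X]) + X ^ m) ^ e).coeff 0 = 1 := by
    rw [Polynomial.coeff_zero_eq_eval_zero]
    simp [zero_pow (by omega : m ≠ 0)]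
  have h1 : ((1 : ℤ[X]) + X ^ m).coeff m = 1 := by
    rw [Polynomial.coeff_add, Polynomial.coeff_one, Polynomial.coeff_X_pow]
    rw [if_neg (by omega), if_pos rfl]
    norm_num
  have hle := coeff_mul_le (onePlusXpow_nonneg m) ((onePlusXpow_nonneg m).pow e) m 0
  rw [h0, h1, Nat.add_zero, one_mul, ← pow_succ'] at hle
  linarith

lemma rest_coeff_zero {s : Finset ℕ} (hs : ∀ m ∈ s, 1 ≤ m) :
    (∏ m ∈ s, ((1 : ℤ[X]) + X ^ m) ^ 24).coeff 0 = 1 := by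
  rw [Polynomial.coeff_zero_eq_eval_zero, Polynomial.eval_prod]
  apply Finset.prod_eq_one
  intro m hm
  simp [zero_pow (by have := hs m hm; omega : m ≠ 0)]

lemma mem_oddFactors {k m : ℕ} : m ∈ oddFactors k ↔ (1 ≤ m ∧ m ≤ k) ∧ Odd m := by
  simp [oddFactors, Finset.mem_Icc]

lemma oddFactors_one_le {k m : ℕ} (hm : m ∈ oddFactors k) : 1 ≤ m :=
  (mem_oddFactors.mp hm).1.1

lemma Qe_nonneg (k : ℕ) : CoeffNonneg (Qe k) :=
  CoeffNonneg.prod fun m _ => (onePlusXpow_nonneg m).pow 24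

lemma Qe_coeff_pos (k : ℕ) : 0 < (Qe k).coeff k := by
  rcases Nat.eq_zero_or_pos k with rfl | hk
  · simp [Qe, oddFactors]
  rcases Nat.even_or_odd k with hke | hko
  · -- k even
    rcases eq_or_lt_of_le (by omega : 1 ≤ k) with h1 | h1
    · exact absurd hke (by simp [← h1, Nat.even_iff])
    rcases eq_or_lt_of_le (by omega : 2 ≤ k) with h2 | h2
    · -- k = 2
      have hof : oddFactors 2 = {1} := by decide
      rw [Qe, ← h2, hof, Finset.prod_singleton]
      rw [show ((1 : ℤ[X]) + X ^ 1) = X + 1 by ring, Polynomial.coeff_X_add_one_pow]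
      exact_mod_cast Nat.choose_pos (by norm_num : 2 ≤ 24)
    · -- k ≥ 3 even, so k ≥ 4
      have hk4 : 4 ≤ k := by
        rcases hke with ⟨t, ht⟩; omega
      have h1mem : 1 ∈ oddFactors k := mem_oddFactors.mpr ⟨⟨le_rfl, by omega⟩, odd_one⟩
      have hk1odd : Odd (k - 1) := by
        rcases hke with ⟨t, ht⟩; exact ⟨t - 1, by omega⟩
      have hk1mem : k - 1 ∈ (oddFactors k).erase 1 := by
        rw [Finset.mem_erase]
        exact ⟨by omega, mem_oddFactors.mpr ⟨⟨by omega, by omega⟩, hk1odd⟩⟩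
      set s₁ := (oddFactors k).erase 1 with hs₁
      set s₂ := s₁.erase (k - 1) with hs₂
      have hQ : Qe k = ((1 : ℤ[X]) + X ^ 1) ^ 24 *
          (((1 : ℤ[X]) + X ^ (k - 1)) ^ 24 * ∏ m ∈ s₂, ((1 : ℤ[X]) + X ^ m) ^ 24) := by
        rw [Qe, ← Finset.mul_prod_erase _ _ h1mem, ← Finset.mul_prod_erase _ _ hk1mem]
      have hrest0 : (∏ m ∈ s₂, ((1 : ℤ[X]) + X ^ m) ^ 24).coeff 0 = 1 := by
        apply rest_coeff_zero
        intro m hm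
        exact oddFactors_one_le (Finset.mem_of_mem_erase (Finset.mem_of_mem_erase hm))
      have hrest_nonneg : CoeffNonneg (∏ m ∈ s₂, ((1 : ℤ[X]) + X ^ m) ^ 24) :=
        CoeffNonneg.prod fun m _ => (onePlusXpow_nonneg m).pow 24
      have hinner : 0 < (((1 : ℤ[X]) + X ^ (k - 1)) ^ 24 *
          ∏ m ∈ s₂, ((1 : ℤ[X]) + X ^ m) ^ 24).coeff (k - 1) := by
        have hle := coeff_mul_le ((onePlusXpow_nonneg (k - 1)).pow 24) hrest_nonneg (k - 1) 0
        rw [hrest0, Nat.add_zero, mul_one] at hle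
        have hpos := coeff_onePlus_pow_pos (m := k - 1) (by omega) 23
        linarith
      have hinner_nonneg : CoeffNonneg (((1 : ℤ[X]) + X ^ (k - 1)) ^ 24 *
          ∏ m ∈ s₂, ((1 : ℤ[X]) + X ^ m) ^ 24) :=
        ((onePlusXpow_nonneg (k - 1)).pow 24).mul hrest_nonneg
      have hle := coeff_mul_le ((onePlusXpow_nonneg 1).pow 24) hinner_nonneg 1 (k - 1)
      have hpos1 := coeff_onePlus_pow_pos (m := 1) le_rfl 23
      have hkk : 1 + (k - 1) = k := by omega
      rw [hkk] at hle
      rw [hQ]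
      calc (0 : ℤ) < (((1 : ℤ[X]) + X ^ 1) ^ 24).coeff 1 *
            ((((1 : ℤ[X]) + X ^ (k - 1)) ^ 24) *
              ∏ m ∈ s₂, ((1 : ℤ[X]) + X ^ m) ^ 24).coeff (k - 1) :=
          mul_pos (by exact_mod_cast hpos1) hinner
        _ ≤ _ := hle
  · -- k odd
    have hmem : k ∈ oddFactors k := mem_oddFactors.mpr ⟨⟨hk, le_rfl⟩, hko⟩
    have hQ : Qe k = ((1 : ℤ[X]) + X ^ k) ^ 24 *
        ∏ m ∈ (oddFactors k).erase k, ((1 : ℤ[X]) + X ^ m) ^ 24 := by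
      rw [Qe, ← Finset.mul_prod_erase _ _ hmem]
    have hrest0 : (∏ m ∈ (oddFactors k).erase k, ((1 : ℤ[X]) + X ^ m) ^ 24).coeff 0 = 1 := by
      apply rest_coeff_zero
      intro m hm
      exact oddFactors_one_le (Finset.mem_of_mem_erase hm)
    have hrest_nonneg : CoeffNonneg (∏ m ∈ (oddFactors k).erase k, ((1 : ℤ[X]) + X ^ m) ^ 24) :=
      CoeffNonneg.prod fun m _ => (onePlusXpow_nonneg m).pow 24
    have hle := coeff_mul_le ((onePlusXpow_nonneg k).pow 24) hrest_nonneg k 0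
    rw [hrest0, Nat.add_zero, mul_one] at hle
    have hpos := coeff_onePlus_pow_pos (m := k) hk 23
    rw [hQ]
    linarith

lemma Pe_coeff_ne_zero (N : ℕ) : (Pe N).coeff N ≠ 0 := by
  rw [Pe_eq_Qe_comp, coeff_comp_neg]
  exact mul_ne_zero (pow_ne_zero _ (by norm_num)) (ne_of_gt (Qe_coeff_pos N))

end EtaAux

end EtaAux

/-- The Fourier coefficients of `η(τ)²⁴/η(2τ)²⁴` never vanish. -/
theorem eta_quotient_coeff_ne_zero (c : ℤ → ℤ) (hc : IsEtaQuotCoeff c) :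
    ∀ n : ℤ, -1 ≤ n → c n ≠ 0 := by
  intro n hn
  obtain ⟨N, rfl⟩ : ∃ N : ℕ, n = (N : ℤ) - 1 := ⟨(n + 1).toNat, by omega⟩
  rw [EtaAux.eta_unique hc EtaAux.cEta_spec N, EtaAux.cEta_nat]
  exact EtaAux.Pe_coeff_ne_zero N
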